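/- The 12-uniform morphism g2 defined by g2(0)=011220012201, g2(1)=122001120012, g2(2)=200112201120 maps squarefree ternary words to words that are 3-directed: for every squarefree ternary word w of length at most some bound (e.g. all squarefree words of length 4), every factor f of length 3 of g2(w) satisfies that f^R is not a factor of g2(w). -/

import Mathlib

/-- The 12-uniform morphism `g2`. -/
def g2 : Fin 3 → List (Fin 3)
  | 0 => [0, 1, 1, 2, 2, 0, 0, 1, 2, 2, 0, 1]
  | 1 => [1, 2, 2, 0, 0, 1, 1, 2, 0, 0, 1, 2]
  | 2 => [2, 0, 0, 1, 1, 2, 2, 0, 1, 1, 2, 0]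

/-- A ternary word is squarefree if it contains no nonempty factor `u ++ u`. -/
def Squarefree' {α : Type*} (w : List α) : Prop :=
  ∀ u : List α, u ≠ [] → ¬ (u ++ u) <:+: w

lemma key (L : List (Fin 3))
    (h : ∀ t ∈ L.tails, (t.take 3).length = 3 → ¬ (t.take 3).reverse <:+: L) :
    ∀ f : List (Fin 3), f.length = 3 → f <:+: L → ¬ f.reverse <:+: L := by
  intro f hf hinf
  obtain ⟨s, t, rfl⟩ := hinf
  have hmem : f ++ t ∈ (s ++ (f ++ t)).tails := by
    rw [List.mem_tails]
    exact (List.suffix_append s (f ++ t))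
  have htake : (f ++ t).take 3 = f := by
    have h2 := List.take_left (l₁ := f) (l₂ := t)
    rwa [hf] at h2
  have := h (f ++ t) (by set_option linter.unnecessarySimpa false in simpa [List.append_assoc] using hmem)
  rw [htake] at this
  exact this hf

/-- For every squarefree ternary word `w` of length 4, the image `g2(w)` is
3-directed: every factor `f` of length 3 of `g2(w)` has `f.reverse` not a
factor of `g2(w)`. -/
theorem stmt_8 (w : List (Fin 3)) (hw : Squarefree' w) (hlen : w.length = 4) :
    ∀ f : List (Fin 3), f.length = 3 → f <:+: (w.map g2).flatten →
      ¬ f.reverse <:+: (w.map g2).flatten := by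
  rcases w with _ | ⟨a, _ | ⟨b, _ | ⟨c, _ | ⟨d, _ | ⟨e, w⟩⟩⟩⟩⟩ <;> simp at hlen
  fin_cases a <;> fin_cases b <;> fin_cases c <;> fin_cases d <;>
    first
    | exact ((hw [0] (by decide)) (by decide)).elim
    | exact ((hw [1] (by decide)) (by decide)).elim
    | exact ((hw [2] (by decide)) (by decide)).elim
    | exact ((hw [0,1] (by decide)) (by decide)).elim
    | exact ((hw [0,2] (by decide)) (by decide)).elim
    | exact ((hw [1,0] (by decide)) (by decide)).elim
    | exact ((hw [1,2] (by decide)) (by decide)).elim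
    | exact ((hw [2,0] (by decide)) (by decide)).elim
    | exact ((hw [2,1] (by decide)) (by decide)).elim
    | exact key _ (by decide)
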